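/- For integers m ≥ 2, n ≥ 0 and reals a > 0, b > 0, the Nuttall Q-function satisfies the recursion Q_{m,n}(a,b) = b^{m-1} I_n(ab) e^{-(a²+b²)/2} + a Q_{m-1,n+1}(a,b) + (m+n-1) Q_{m-2,n}(a,b). -/

import Mathlib

open MeasureTheory Real Filter Topology

noncomputable def uGamma (a x : ℝ) : ℝ := ∫ t in Set.Ioi x, t ^ (a - 1) * Real.exp (-t)

noncomputable def lGamma (a x : ℝ) : ℝ := ∫ t in Set.Ioc 0 x, t ^ (a - 1) * Real.exp (-t)

noncomputable def poch (x : ℝ) (l : ℕ) : ℝ := ∏ i ∈ Finset.range l, (x + i)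

noncomputable def besselI (n x : ℝ) : ℝ :=
  ∑' l : ℕ, (x / 2) ^ (n + 2 * (l : ℝ)) / ((l.factorial : ℝ) * Real.Gamma (n + (l : ℝ) + 1))

noncomputable def oneF₁ (α β x : ℝ) : ℝ :=
  ∑' i : ℕ, (poch α i / poch β i) * x ^ i / (i.factorial : ℝ)

noncomputable def nuttallQ (m n a b : ℝ) : ℝ :=
  ∫ x in Set.Ioi b, x ^ m * Real.exp (-(x ^ 2 + a ^ 2) / 2) * besselI n (a * x)

noncomputable def nQ (m n a b : ℝ) : ℝ := a ^ (-n) * nuttallQ m n a b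

noncomputable def marcumQ (ν a b : ℝ) : ℝ :=
  a ^ (1 - ν) * ∫ x in Set.Ioi b, x ^ ν * Real.exp (-(x ^ 2 + a ^ 2) / 2) * besselI (ν - 1) (a * x)

noncomputable def toronto (B m n r : ℝ) : ℝ :=
  2 * r ^ (n - m + 1) * Real.exp (-r ^ 2) *
    ∫ t in Set.Ioo 0 B, t ^ (m - n) * Real.exp (-t ^ 2) * besselI n (2 * r * t)

/-! ### Auxiliary definitions -/

noncomputable def cc (a : ℝ) (n l : ℕ) : ℝ :=
  (a / 2) ^ (n + 2 * l) / ((l.factorial : ℝ) * ((n + l).factorial : ℝ))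

noncomputable def JJ (b : ℝ) (k : ℕ) : ℝ := ∫ x in Set.Ioi b, x ^ k * Real.exp (-(x ^ 2) / 2)

noncomputable def GG (b : ℝ) : ℝ := ∫ x in Set.Ioi b, Real.exp (-(x ^ 2) / 4)

lemma cc_nonneg {a : ℝ} (ha : 0 ≤ a) (n l : ℕ) : 0 ≤ cc a n l := by
  unfold cc; positivity

lemma fact_bound (l q : ℕ) : ((l + q).factorial : ℝ) ≤ 2 ^ (l + q) * l.factorial * q.factorial := by
  have h : (l + q).factorial ≤ 2 ^ (l + q) * (l.factorial * q.factorial) := by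
    have h1 : (l + q).choose q * l.factorial * q.factorial = (l + q).factorial :=
      Nat.add_choose_mul_factorial_mul_factorial l q
    have h2 : (l + q).choose q ≤ 2 ^ (l + q) := by
      calc (l + q).choose q ≤ ∑ m ∈ Finset.range (l + q + 1), (l + q).choose m := by
            apply Finset.single_le_sum (f := fun m => (l + q).choose m)
            · intro i _; exact Nat.zero_le _
            · simp [Nat.lt_succ_iff]
        _ = 2 ^ (l + q) := Nat.sum_range_choose _
    calc (l + q).factorial = (l + q).choose q * l.factorial * q.factorial := h1.symm
      _ ≤ 2 ^ (l + q) * l.factorial * q.factorial := by gcongr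
      _ = 2 ^ (l + q) * (l.factorial * q.factorial) := by ring
  calc ((l + q).factorial : ℝ) ≤ ((2 ^ (l + q) * (l.factorial * q.factorial) : ℕ) : ℝ) := by
        exact_mod_cast h
    _ = 2 ^ (l + q) * l.factorial * q.factorial := by push_cast; ring

lemma pow_exp_bound (k q : ℕ) (hk : k ≤ 2 * q) {x : ℝ} (hx : 0 ≤ x) :
    x ^ k * Real.exp (-(x ^ 2) / 2) ≤ (1 + 4 ^ q * q.factorial) * Real.exp (-(x ^ 2) / 4) := by
  have h1 : x ^ k ≤ 1 + x ^ (2 * q) := by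
    rcases le_total x 1 with h | h
    · have := pow_le_one₀ hx h (n := k); nlinarith [pow_nonneg hx (2 * q)]
    · have := pow_le_pow_right₀ h hk; nlinarith
  have h2 : Real.exp (-(x ^ 2) / 2) ≤ Real.exp (-(x ^ 2) / 4) := by
    apply Real.exp_le_exp.2; nlinarith [sq_nonneg x]
  have h3 : x ^ (2 * q) * Real.exp (-(x ^ 2) / 2) ≤ 4 ^ q * q.factorial * Real.exp (-(x ^ 2) / 4) := by
    have h4 : (x ^ 2 / 4) ^ q / q.factorial ≤ Real.exp (x ^ 2 / 4) :=
      Real.pow_div_factorial_le_exp (x := x ^ 2 / 4) (by positivity) q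
    have h5 : x ^ (2 * q) ≤ 4 ^ q * q.factorial * Real.exp (x ^ 2 / 4) := by
      have hfq : (0:ℝ) < q.factorial := by positivity
      have := (div_le_iff₀ hfq).1 h4
      calc x ^ (2 * q) = (x ^ 2) ^ q := by rw [pow_mul]
        _ = 4 ^ q * (x ^ 2 / 4) ^ q := by rw [div_pow]; field_simp
        _ ≤ 4 ^ q * (q.factorial * Real.exp (x ^ 2 / 4)) := by gcongr; linarith [this]
        _ = 4 ^ q * q.factorial * Real.exp (x ^ 2 / 4) := by ring
    calc x ^ (2 * q) * Real.exp (-(x ^ 2) / 2)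
        ≤ (4 ^ q * q.factorial * Real.exp (x ^ 2 / 4)) * Real.exp (-(x ^ 2) / 2) := by
          gcongr
      _ = 4 ^ q * q.factorial * Real.exp (-(x ^ 2) / 4) := by
          rw [mul_assoc, ← Real.exp_add]; ring_nf
  calc x ^ k * Real.exp (-(x ^ 2) / 2) ≤ (1 + x ^ (2 * q)) * Real.exp (-(x ^ 2) / 2) := by
        gcongr
    _ = Real.exp (-(x ^ 2) / 2) + x ^ (2 * q) * Real.exp (-(x ^ 2) / 2) := by ring
    _ ≤ Real.exp (-(x ^ 2) / 4) + 4 ^ q * q.factorial * Real.exp (-(x ^ 2) / 4) :=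
        add_le_add h2 h3
    _ = (1 + 4 ^ q * q.factorial) * Real.exp (-(x ^ 2) / 4) := by ring

lemma integrable_pow_exp (k : ℕ) : Integrable (fun x : ℝ => x ^ k * Real.exp (-(x ^ 2) / 2)) := by
  have h := integrable_rpow_mul_exp_neg_mul_sq (b := (1:ℝ)/2) (by norm_num) (s := (k : ℝ))
    (lt_of_lt_of_le (by norm_num) (Nat.cast_nonneg k))
  refine h.congr (Eventually.of_forall fun x => ?_)
  simp only [Real.rpow_natCast]
  ring_nf

lemma integrable_exp4 : Integrable (fun x : ℝ => Real.exp (-(x ^ 2) / 4)) := by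
  have h := integrable_exp_neg_mul_sq (b := (1:ℝ)/4) (by norm_num)
  refine h.congr (Eventually.of_forall fun x => ?_)
  ring_nf

lemma JJ_nonneg {b : ℝ} (hb : 0 ≤ b) (k : ℕ) : 0 ≤ JJ b k := by
  apply setIntegral_nonneg measurableSet_Ioi
  intro x hx
  have : 0 ≤ x := le_trans hb (le_of_lt hx)
  positivity

lemma GG_nonneg (b : ℝ) : 0 ≤ GG b := by
  apply setIntegral_nonneg measurableSet_Ioi
  intro x _; positivity

lemma JJ_le {b : ℝ} (hb : 0 ≤ b) (k q : ℕ) (hk : k ≤ 2 * q) :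
    JJ b k ≤ (1 + 4 ^ q * q.factorial) * GG b := by
  have hbd : ∀ x ∈ Set.Ioi b, x ^ k * Real.exp (-(x ^ 2) / 2) ≤
      (1 + 4 ^ q * q.factorial) * Real.exp (-(x ^ 2) / 4) := fun x hx =>
    pow_exp_bound k q hk (le_trans hb (le_of_lt hx))
  calc JJ b k ≤ ∫ x in Set.Ioi b, (1 + 4 ^ q * q.factorial) * Real.exp (-(x ^ 2) / 4) := by
        apply setIntegral_mono_on ((integrable_pow_exp k).integrableOn)
          ((integrable_exp4.integrableOn).const_mul _) measurableSet_Ioi hbd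
    _ = (1 + 4 ^ q * q.factorial) * GG b := by rw [integral_const_mul]; rfl

lemma tendsto_pow_exp_zero (k : ℕ) :
    Tendsto (fun x : ℝ => x ^ k * Real.exp (-(x ^ 2) / 2)) atTop (𝓝 0) := by
  have h := rpow_mul_exp_neg_mul_sq_isLittleO_exp_neg (b := (1:ℝ)/2) (by norm_num) (k : ℝ)
  have hm : Tendsto (fun x : ℝ => 1 / 2 * x) atTop atTop :=
    (tendsto_id (α := ℝ)).const_mul_atTop (by norm_num)
  have h2 : Tendsto (fun x : ℝ => Real.exp (-(1 / 2) * x)) atTop (𝓝 0) :=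
    (Real.tendsto_exp_neg_atTop_nhds_zero.comp hm).congr (fun x => by rw [Function.comp]; ring_nf)
  have h3 := h.isBigO.trans_tendsto h2
  refine h3.congr (fun x => ?_)
  simp only [Real.rpow_natCast]
  ring_nf

lemma JJ_rec {b : ℝ} (j : ℕ) :
    JJ b (j + 2) = b ^ (j + 1) * Real.exp (-(b ^ 2) / 2) + (j + 1 : ℝ) * JJ b j := by
  set F : ℝ → ℝ := fun x => -(x ^ (j + 1) * Real.exp (-(x ^ 2) / 2)) with hF
  set f' : ℝ → ℝ := fun x =>
    x ^ (j + 2) * Real.exp (-(x ^ 2) / 2) - (j + 1 : ℝ) * (x ^ j * Real.exp (-(x ^ 2) / 2)) with hf'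
  have hderiv : ∀ x ∈ Set.Ioi b, HasDerivAt F (f' x) x := by
    intro x _
    have h1 : HasDerivAt (fun x : ℝ => x ^ (j + 1)) ((j + 1 : ℝ) * x ^ j) x := by
      simpa using hasDerivAt_pow (j + 1) x
    have h2 : HasDerivAt (fun x : ℝ => -(x ^ 2) / 2) (-x) x := by
      have := (hasDerivAt_pow 2 x).neg.div_const 2
      simpa using this.congr_deriv (by ring)
    have h3 : HasDerivAt (fun x : ℝ => Real.exp (-(x ^ 2) / 2))
        (Real.exp (-(x ^ 2) / 2) * (-x)) x := h2.exp
    have h4 := (h1.mul h3).neg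
    refine h4.congr_deriv ?_
    simp only [hf']
    ring
  have hint : IntegrableOn f' (Set.Ioi b) :=
    ((integrable_pow_exp (j + 2)).sub ((integrable_pow_exp j).const_mul _)).integrableOn
  have hcont : ContinuousWithinAt F (Set.Ici b) b := by
    apply Continuous.continuousWithinAt
    fun_prop
  have htend : Tendsto F atTop (𝓝 0) := by
    have := (tendsto_pow_exp_zero (j + 1)).neg
    simpa using this
  have key := integral_Ioi_of_hasDerivAt_of_tendsto hcont hderiv hint htend
  have hsplit : ∫ x in Set.Ioi b, f' x = JJ b (j + 2) - (j + 1 : ℝ) * JJ b j := by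
    simp only [hf']
    rw [integral_sub ((integrable_pow_exp (j + 2)).integrableOn)
      (((integrable_pow_exp j).const_mul _).integrableOn), integral_const_mul]
    rfl
  rw [hsplit] at key
  simp only [hF] at key
  have : JJ b (j + 2) - (j + 1 : ℝ) * JJ b j = b ^ (j + 1) * Real.exp (-(b ^ 2) / 2) := by
    rw [key]; ring
  linarith

lemma besselI_nat (n : ℕ) (y : ℝ) :
    besselI n y = ∑' l : ℕ, (y / 2) ^ (n + 2 * l) / ((l.factorial : ℝ) * ((n + l).factorial : ℝ)) := by
  unfold besselI
  refine tsum_congr fun l => ?_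
  have h1 : ((n : ℝ) + 2 * (l : ℝ)) = ((n + 2 * l : ℕ) : ℝ) := by push_cast; ring
  have h2 : ((n : ℝ) + (l : ℝ) + 1) = ((n + l : ℕ) : ℝ) + 1 := by push_cast; ring
  rw [h1, h2, Real.rpow_natCast, Real.Gamma_nat_eq_factorial]

lemma summable_master {a : ℝ} (ha : 0 ≤ a) (N q0 : ℕ) :
    Summable (fun l : ℕ => cc a N l * (1 + 4 ^ (l + q0) * ((l + q0).factorial : ℝ))) := by
  have hb : Summable (fun l : ℕ =>
      (2 * (a / 2) ^ N * 8 ^ q0 * q0.factorial) * ((2 * a ^ 2) ^ l / l.factorial)) :=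
    (Real.summable_pow_div_factorial (2 * a ^ 2)).mul_left _
  refine Summable.of_nonneg_of_le (fun l => ?_) (fun l => ?_) hb
  · have := cc_nonneg ha N l
    positivity
  · have hfact1 : (1:ℝ) ≤ ((l + q0).factorial : ℝ) := by
      exact_mod_cast Nat.one_le_iff_ne_zero.2 (Nat.factorial_ne_zero _)
    have h41 : (1:ℝ) ≤ 4 ^ (l + q0) := one_le_pow₀ (by norm_num)
    have h1 : (1 : ℝ) + 4 ^ (l + q0) * ((l + q0).factorial : ℝ) ≤
        2 * (4 ^ (l + q0) * ((l + q0).factorial : ℝ)) := by nlinarith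
    have hccnn := cc_nonneg ha N l
    calc cc a N l * (1 + 4 ^ (l + q0) * ((l + q0).factorial : ℝ))
        ≤ cc a N l * (2 * (4 ^ (l + q0) * ((l + q0).factorial : ℝ))) := by gcongr
      _ ≤ cc a N l * (2 * (4 ^ (l + q0) * (2 ^ (l + q0) * l.factorial * q0.factorial))) := by
          gcongr
          exact fact_bound l q0
      _ = (a / 2) ^ (N + 2 * l) * (2 * 4 ^ (l + q0) * 2 ^ (l + q0) * q0.factorial) /
            ((N + l).factorial : ℝ) := by
          unfold cc
          have hfl : ((l.factorial : ℝ)) ≠ 0 := by positivity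
          have hfnl : (((N + l).factorial : ℝ)) ≠ 0 := by positivity
          field_simp
      _ ≤ (a / 2) ^ (N + 2 * l) * (2 * 4 ^ (l + q0) * 2 ^ (l + q0) * q0.factorial) /
            (l.factorial : ℝ) := by
          apply div_le_div_of_nonneg_left (by positivity) (by positivity)
          exact_mod_cast Nat.factorial_le (by omega)
      _ = (2 * (a / 2) ^ N * 8 ^ q0 * q0.factorial) * ((2 * a ^ 2) ^ l / l.factorial) := by
          rw [show (2 * a ^ 2 : ℝ) = 4 * 2 * (a / 2) ^ 2 by ring, mul_pow, mul_pow,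
            pow_add, pow_add, pow_add, pow_mul, show (8:ℝ) ^ q0 = 4 ^ q0 * 2 ^ q0 by
              rw [← mul_pow]; norm_num]
          field_simp

lemma summable_cJ {a b : ℝ} (ha : 0 ≤ a) (hb : 0 ≤ b) (N M : ℕ) :
    Summable (fun l : ℕ => cc a N l * JJ b (M + N + 2 * l)) := by
  refine Summable.of_nonneg_of_le (fun l => mul_nonneg (cc_nonneg ha N l) (JJ_nonneg hb _))
    (fun l => ?_) (((summable_master ha N (M + N)).mul_right (GG b)))
  have h := JJ_le hb (M + N + 2 * l) (l + (M + N)) (by omega)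
  calc cc a N l * JJ b (M + N + 2 * l)
      ≤ cc a N l * ((1 + 4 ^ (l + (M + N)) * ((l + (M + N)).factorial : ℝ)) * GG b) := by
        have := cc_nonneg ha N l
        gcongr
    _ = cc a N l * (1 + 4 ^ (l + (M + N)) * ((l + (M + N)).factorial : ℝ)) * GG b := by ring

lemma cc_rec {a : ℝ} (n l : ℕ) :
    (2 * ((l : ℝ) + 1)) * cc a n (l + 1) = a * cc a (n + 1) l := by
  unfold cc
  have h1 : (n + 2 * (l + 1)) = (n + 1 + 2 * l) + 1 := by omega
  rw [h1, pow_succ]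
  rw [Nat.factorial_succ, show n + (l + 1) = (n + 1 + l) by omega]
  push_cast
  have hfl : ((l.factorial : ℝ)) ≠ 0 := by positivity
  have hf2 : (((n + 1 + l).factorial : ℝ)) ≠ 0 := by positivity
  field_simp

lemma nuttall_eq {a b : ℝ} (ha : 0 < a) (hb : 0 < b) (M N : ℕ) :
    nuttallQ M N a b = Real.exp (-(a ^ 2) / 2) * ∑' l : ℕ, cc a N l * JJ b (M + N + 2 * l) := by
  set E := Real.exp (-(a ^ 2) / 2) with hE
  have hEpos : 0 < E := Real.exp_pos _
  set h : ℕ → ℝ → ℝ := fun l x => (cc a N l * E) * (x ^ (M + N + 2 * l) * Real.exp (-(x ^ 2) / 2))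
    with hh
  have hfun : ∀ x : ℝ, x ^ (M : ℝ) * Real.exp (-(x ^ 2 + a ^ 2) / 2) * besselI N (a * x)
      = ∑' l : ℕ, h l x := by
    intro x
    rw [besselI_nat, ← tsum_mul_left]
    refine tsum_congr fun l => ?_
    simp only [hh]
    unfold cc
    rw [Real.rpow_natCast]
    have e1 : (a * x / 2) ^ (N + 2 * l) = (a / 2) ^ (N + 2 * l) * x ^ (N + 2 * l) := by
      rw [← mul_pow]; ring_nf
    have e2 : x ^ (M + N + 2 * l) = x ^ M * x ^ (N + 2 * l) := by
      rw [show M + N + 2 * l = M + (N + 2 * l) by omega, pow_add]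
    have e3 : Real.exp (-(x ^ 2 + a ^ 2) / 2) = Real.exp (-(x ^ 2) / 2) * E := by
      rw [hE, ← Real.exp_add]; ring_nf
    rw [e1, e2, e3]
    ring
  have hint : ∀ l : ℕ, Integrable (h l) (volume.restrict (Set.Ioi b)) := fun l =>
    (((integrable_pow_exp (M + N + 2 * l)).const_mul _)).integrableOn
  have hnorm : ∀ l : ℕ, (∫ x in Set.Ioi b, ‖h l x‖) = (cc a N l * E) * JJ b (M + N + 2 * l) := by
    intro l
    rw [setIntegral_congr_fun measurableSet_Ioi (g := h l) ?_, hh]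
    · rw [integral_const_mul]; rfl
    · intro x hx
      have hx0 : (0:ℝ) ≤ x := le_trans hb.le (le_of_lt hx)
      have : 0 ≤ h l x := by
        simp only [hh]
        have := cc_nonneg ha.le N l
        positivity
      exact norm_of_nonneg this
  have hsum : Summable fun l : ℕ => ∫ x in Set.Ioi b, ‖h l x‖ := by
    refine Summable.congr (f := fun l => (cc a N l * E) * JJ b (M + N + 2 * l)) ?_
      (fun l => (hnorm l).symm)
    simpa [mul_comm, mul_assoc, mul_left_comm] using ((summable_cJ ha.le hb.le N M).mul_left E)
  have key := integral_tsum_of_summable_integral_norm hint hsum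
  unfold nuttallQ
  calc (∫ x in Set.Ioi b, x ^ (M : ℝ) * Real.exp (-(x ^ 2 + a ^ 2) / 2) * besselI N (a * x))
      = ∫ x in Set.Ioi b, ∑' l : ℕ, h l x := by
        refine setIntegral_congr_fun measurableSet_Ioi fun x _ => hfun x
    _ = ∑' l : ℕ, ∫ x in Set.Ioi b, h l x := key.symm
    _ = ∑' l : ℕ, E * (cc a N l * JJ b (M + N + 2 * l)) := by
        refine tsum_congr fun l => ?_
        rw [hh]
        rw [integral_const_mul]
        show (cc a N l * E) * JJ b (M + N + 2 * l) = _
        ring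
    _ = E * ∑' l : ℕ, cc a N l * JJ b (M + N + 2 * l) := tsum_mul_left

theorem stmt17 (m n : ℕ) (hm : 2 ≤ m) (a b : ℝ) (ha : 0 < a) (hb : 0 < b) :
    nuttallQ (m : ℝ) (n : ℝ) a b =
      b ^ ((m : ℝ) - 1) * besselI (n : ℝ) (a * b) * Real.exp (-(a ^ 2 + b ^ 2) / 2) +
        a * nuttallQ ((m : ℝ) - 1) ((n : ℝ) + 1) a b +
        ((m : ℝ) + (n : ℝ) - 1) * nuttallQ ((m : ℝ) - 2) (n : ℝ) a b := by
  have ha' := ha.le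
  have hb' := hb.le
  set E := Real.exp (-(a ^ 2) / 2) with hE
  set eb := Real.exp (-(b ^ 2) / 2) with heb
  have c1 : ((m : ℝ) - 1) = ((m - 1 : ℕ) : ℝ) := by
    rw [Nat.cast_sub (by omega : 1 ≤ m), Nat.cast_one]
  have c2 : ((m : ℝ) - 2) = ((m - 2 : ℕ) : ℝ) := by
    rw [Nat.cast_sub (by omega : 2 ≤ m)]; norm_num
  have c3 : ((n : ℝ) + 1) = ((n + 1 : ℕ) : ℝ) := by push_cast; ring
  have hs1 : ((m + n - 1 : ℕ) : ℝ) = (m : ℝ) + (n : ℝ) - 1 := by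
    rw [Nat.cast_sub (by omega : 1 ≤ m + n)]; push_cast; ring
  -- the three series representations
  have e1 : nuttallQ (m : ℝ) (n : ℝ) a b
      = E * ∑' l : ℕ, cc a n l * JJ b (m + n + 2 * l) := nuttall_eq ha hb m n
  have e2 : nuttallQ ((m : ℝ) - 1) ((n : ℝ) + 1) a b
      = E * ∑' l : ℕ, cc a (n + 1) l * JJ b (m + n + 2 * l) := by
    rw [c1, c3, nuttall_eq ha hb (m - 1) (n + 1),
      show m - 1 + (n + 1) = m + n from by omega]
  have e3 : nuttallQ ((m : ℝ) - 2) (n : ℝ) a b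
      = E * ∑' l : ℕ, cc a n l * JJ b (m - 2 + n + 2 * l) :=  by
    rw [c2, nuttall_eq ha hb (m - 2) n]
  -- the boundary term as a series
  have e4 : b ^ ((m : ℝ) - 1) * besselI (n : ℝ) (a * b) * Real.exp (-(a ^ 2 + b ^ 2) / 2)
      = E * ∑' l : ℕ, cc a n l * (b ^ (m + n - 1 + 2 * l) * eb) := by
    rw [c1, Real.rpow_natCast, besselI_nat,
      show Real.exp (-(a ^ 2 + b ^ 2) / 2) = E * eb by rw [hE, heb, ← Real.exp_add]; ring_nf,
      ← tsum_mul_left, ← tsum_mul_right, ← tsum_mul_left]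
    refine tsum_congr fun l => ?_
    unfold cc
    have eab : (a * b / 2) ^ (n + 2 * l) = (a / 2) ^ (n + 2 * l) * b ^ (n + 2 * l) := by
      rw [← mul_pow]; ring_nf
    have ebb : b ^ (m + n - 1 + 2 * l) = b ^ (m - 1) * b ^ (n + 2 * l) := by
      rw [← pow_add, show m - 1 + (n + 2 * l) = m + n - 1 + 2 * l from by omega]
    rw [eab, ebb]
    ring
  -- summability
  have hA : Summable (fun l : ℕ => cc a n l * JJ b (m + n + 2 * l)) :=
    summable_cJ ha' hb' n m
  have hB : Summable (fun l : ℕ => cc a n l * JJ b (m - 2 + n + 2 * l)) :=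
    summable_cJ ha' hb' n (m - 2)
  have hA' : Summable (fun l : ℕ => cc a (n + 1) l * JJ b (m + n + 2 * l)) := by
    have := summable_cJ ha' hb' (n + 1) (m - 1)
    rwa [show m - 1 + (n + 1) = m + n from by omega] at this
  have hu : Summable (fun l : ℕ => cc a n l * (b ^ (m + n - 1 + 2 * l) * eb)) := by
    have hbase : Summable (fun l : ℕ =>
        ((a / 2) ^ n * b ^ (m + n - 1) * eb) * (((a / 2) ^ 2 * b ^ 2) ^ l / l.factorial)) :=
      (Real.summable_pow_div_factorial _).mul_left _
    refine Summable.of_nonneg_of_le (fun l => ?_) (fun l => ?_) hbase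
    · have := cc_nonneg ha' n l
      positivity
    · have heq : cc a n l * (b ^ (m + n - 1 + 2 * l) * eb)
          = ((a / 2) ^ n * b ^ (m + n - 1) * eb) *
            (((a / 2) ^ 2 * b ^ 2) ^ l / (l.factorial * (n + l).factorial)) := by
        unfold cc
        rw [pow_add, pow_mul, pow_add, pow_mul, mul_pow]
        have hfl : ((l.factorial : ℝ)) ≠ 0 := by positivity
        have hf2 : (((n + l).factorial : ℝ)) ≠ 0 := by positivity
        field_simp
      rw [heq]
      have h1 : (1:ℝ) ≤ ((n + l).factorial : ℝ) := by
        exact_mod_cast Nat.one_le_iff_ne_zero.2 (Nat.factorial_ne_zero _)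
      have h0 : (0:ℝ) < (l.factorial : ℝ) := by positivity
      have hden : (l.factorial : ℝ) ≤ (l.factorial : ℝ) * ((n + l).factorial : ℝ) := by nlinarith
      apply mul_le_mul_of_nonneg_left ?_ (by positivity)
      exact div_le_div_of_nonneg_left (by positivity) (by positivity) hden
  -- pointwise recursion
  have hpt : ∀ l : ℕ, cc a n l * JJ b (m + n + 2 * l)
      = cc a n l * (b ^ (m + n - 1 + 2 * l) * eb)
        + ((m + n - 1 : ℕ) : ℝ) * (cc a n l * JJ b (m - 2 + n + 2 * l))
        + (2 * (l : ℝ)) * (cc a n l * JJ b (m - 2 + n + 2 * l)) := by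
    intro l
    have hj := JJ_rec (b := b) (m - 2 + n + 2 * l)
    rw [show m - 2 + n + 2 * l + 2 = m + n + 2 * l from by omega,
      show m - 2 + n + 2 * l + 1 = m + n - 1 + 2 * l from by omega] at hj
    rw [hj]
    have hcast : ((m - 2 + n + 2 * l : ℕ) : ℝ) + 1 = ((m + n - 1 : ℕ) : ℝ) + 2 * (l : ℝ) := by
      rw [Nat.cast_sub (by omega : 1 ≤ m + n), Nat.cast_add, Nat.cast_add,
        Nat.cast_sub (by omega : 2 ≤ m)]
      push_cast
      ring
    rw [hcast]
    ring
  have hD : Summable (fun l : ℕ => (2 * (l : ℝ)) * (cc a n l * JJ b (m - 2 + n + 2 * l))) := by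
    refine (((hA.sub hu).sub (hB.mul_left ((m + n - 1 : ℕ) : ℝ))).congr fun l => ?_)
    have := hpt l
    show _ - _ - _ = _
    linarith
  -- the series identity
  have hsplit : ∑' l : ℕ, cc a n l * JJ b (m + n + 2 * l)
      = (∑' l : ℕ, cc a n l * (b ^ (m + n - 1 + 2 * l) * eb))
        + ((m + n - 1 : ℕ) : ℝ) * (∑' l : ℕ, cc a n l * JJ b (m - 2 + n + 2 * l))
        + ∑' l : ℕ, (2 * (l : ℝ)) * (cc a n l * JJ b (m - 2 + n + 2 * l)) := by
    rw [tsum_congr hpt,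
      Summable.tsum_add (hu.add (hB.mul_left _)) hD,
      Summable.tsum_add hu (hB.mul_left _), tsum_mul_left]
  have htail : ∑' l : ℕ, (2 * (l : ℝ)) * (cc a n l * JJ b (m - 2 + n + 2 * l))
      = a * ∑' l : ℕ, cc a (n + 1) l * JJ b (m + n + 2 * l) := by
    rw [Summable.tsum_eq_zero_add hD]
    simp only [Nat.cast_zero, mul_zero, zero_mul, zero_add]
    rw [← tsum_mul_left]
    refine tsum_congr fun l => ?_
    have h := cc_rec (a := a) n l
    rw [show m - 2 + n + 2 * (l + 1) = m + n + 2 * l from by omega]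
    push_cast
    calc (2 * ((l : ℝ) + 1)) * (cc a n (l + 1) * JJ b (m + n + 2 * l))
        = ((2 * ((l : ℝ) + 1)) * cc a n (l + 1)) * JJ b (m + n + 2 * l) := by ring
      _ = (a * cc a (n + 1) l) * JJ b (m + n + 2 * l) := by rw [h]
      _ = a * (cc a (n + 1) l * JJ b (m + n + 2 * l)) := by ring
  rw [e1, e2, e3, e4, hsplit, htail, hs1]
  ring
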